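/- Let d ≥ 1 and let φ ∈ L¹(ℝ^d; ℂ) satisfy φ(ξ) ≠ 0 for Lebesgue-almost every ξ ∈ ℝ^d. Define K(s,t) := ∫_{ℝ^d} e^{−i(s−t)·ξ} φ(ξ) dξ for s, t ∈ ℝ^d. Then K satisfies condition (A3): for every injective sequence (x_j)_{j∈ℕ} in ℝ^d and every complex sequence (c_j) with ∑_j |c_j| < ∞, if ∑_{j=1}^∞ c_j K(x_j, t) = 0 for all t ∈ ℝ^d, then c_j = 0 for all j. -/

import Mathlib

open MeasureTheory FourierTransform Real Complex SchwartzMap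
open scoped ContDiff

variable {d : ℕ}

noncomputable def aux_schwartz_of_compact {V : Type*} [NormedAddCommGroup V] [NormedSpace ℝ V]
    (g : V → ℂ) (hg : ContDiff ℝ ∞ g) (hsupp : HasCompactSupport g) : 𝓢(V, ℂ) :=
  { toFun := g
    smooth' := hg
    decay' := by
      intro k n
      have hcont : Continuous fun x => ‖x‖ ^ k * ‖iteratedFDeriv ℝ n g x‖ :=
        ((continuous_norm.pow k).mul (hg.continuous_iteratedFDeriv (mod_cast le_top)).norm)
      have hsupp' : HasCompactSupport fun x => ‖x‖ ^ k * ‖iteratedFDeriv ℝ n g x‖ :=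
        ((hsupp.iteratedFDeriv n).norm.mul_left)
      obtain ⟨C, hC⟩ := hsupp'.exists_bound_of_continuous hcont
      exact ⟨C, fun x => (le_abs_self _).trans ((Real.norm_eq_abs _) ▸ hC x)⟩ }

lemma aux_fourier_inj {F : EuclideanSpace ℝ (Fin d) → ℂ}
    (hF : Integrable F) (h : ∀ w, 𝓕 F w = 0) :
    ∀ᵐ v, F v = 0 := by
  have := ae_eq_zero_of_integral_contDiff_smul_eq_zero hF.locallyIntegrable (fun g hg hgsupp => ?_)
  · filter_upwards [this] with v hv using hv
  · -- complexify g
    set gc : EuclideanSpace ℝ (Fin d) → ℂ := fun x => (g x : ℂ) with hgc_def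
    have hgc : ContDiff ℝ ∞ gc := Complex.ofRealCLM.contDiff.comp hg
    have hgcsupp : HasCompactSupport gc := hgsupp.comp_left (g := Complex.ofReal) Complex.ofReal_zero
    set gS : 𝓢(EuclideanSpace ℝ (Fin d), ℂ) := aux_schwartz_of_compact gc hgc hgcsupp with hgS
    set ψ : 𝓢(EuclideanSpace ℝ (Fin d), ℂ) := (FourierTransform.fourierCLE ℝ 𝓢(EuclideanSpace ℝ (Fin d), ℂ)).symm gS with hψ
    have hfψ : 𝓕 ⇑ψ = ⇑gS := by
      have := (FourierTransform.fourierCLE ℝ 𝓢(EuclideanSpace ℝ (Fin d), ℂ)).apply_symm_apply gS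
      rw [← this, SchwartzMap.fourierTransformCLE_apply, SchwartzMap.fourier_coe]
    have flip : ∫ ξ, (VectorFourier.fourierIntegral 𝐞 volume (innerₗ (EuclideanSpace ℝ (Fin d))) ⇑ψ ξ) • F ξ
        = ∫ x, ψ x • (VectorFourier.fourierIntegral 𝐞 volume (innerₗ (EuclideanSpace ℝ (Fin d))).flip F x) :=
      VectorFourier.integral_fourierIntegral_smul_eq_flip (L := innerₗ (EuclideanSpace ℝ (Fin d)))
        Real.continuous_fourierChar continuous_inner ψ.integrable hF
    rw [flip_innerₗ] at flip
    have hzero : ∫ x, ψ x • (VectorFourier.fourierIntegral 𝐞 volume (innerₗ (EuclideanSpace ℝ (Fin d))) F x) = 0 := by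
      simp only [show (VectorFourier.fourierIntegral 𝐞 volume (innerₗ (EuclideanSpace ℝ (Fin d))) F) = fun x => (0 : ℂ) from funext h, smul_zero, integral_zero]
    have key : ∫ ξ, gc ξ * F ξ = 0 := by
      have : (VectorFourier.fourierIntegral 𝐞 volume (innerₗ (EuclideanSpace ℝ (Fin d))) ⇑ψ) = gc := by
        rw [show (VectorFourier.fourierIntegral 𝐞 volume (innerₗ (EuclideanSpace ℝ (Fin d))) ⇑ψ) = 𝓕 ⇑ψ from rfl, hfψ]; rfl
      calc ∫ ξ, gc ξ * F ξ = ∫ ξ, (VectorFourier.fourierIntegral 𝐞 volume (innerₗ (EuclideanSpace ℝ (Fin d))) ⇑ψ ξ) • F ξ := by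
            rw [this]; rfl
        _ = 0 := by rw [flip, hzero]
    calc ∫ x, g x • F x = ∫ ξ, gc ξ * F ξ := by
          simp only [hgc_def, Complex.real_smul]
      _ = 0 := key
open MeasureTheory Filter
open scoped Topology

-- single-variable integral facts
noncomputable def Jint (b S : ℝ) : ℂ := ∫ u in Set.Ioc (-S) S, Complex.exp ((-Complex.I * b) * u)

lemma norm_exp_unit (b u : ℝ) : ‖Complex.exp ((-Complex.I * b) * u)‖ = 1 := by
  rw [Complex.norm_exp]
  have : ((-Complex.I * b) * u).re = 0 := by simp
  rw [this, Real.exp_zero]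

lemma Jint_zero {S : ℝ} (hS : 0 < S) : Jint 0 S = ((2 * S : ℝ) : ℂ) := by
  have : ∀ u : ℝ, Complex.exp ((-Complex.I * (0:ℝ)) * u) = 1 := by
    intro u; simp
  rw [Jint]
  simp only [this]
  rw [setIntegral_const, measureReal_def, Real.volume_Ioc]
  rw [ENNReal.toReal_ofReal (by linarith)]
  push_cast
  ring_nf
  rw [Complex.real_smul]; push_cast; ring

lemma Jint_norm_le {b S : ℝ} (hS : 0 < S) : ‖Jint b S‖ ≤ 2 * S := by
  have h := norm_setIntegral_le_of_norm_le_const (C := 1) (s := Set.Ioc (-S) S)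
    (f := fun u : ℝ => Complex.exp ((-Complex.I * b) * u))
    (by rw [Real.volume_Ioc]; exact ENNReal.ofReal_lt_top)
    (fun x _ => le_of_eq (norm_exp_unit b x))
  rw [measureReal_def, Real.volume_Ioc, ENNReal.toReal_ofReal (by linarith)] at h
  calc ‖Jint b S‖ ≤ 1 * (S - -S) := h
    _ = 2 * S := by ring

lemma Jint_norm_le_of_ne {b S : ℝ} (hb : b ≠ 0) (hS : 0 < S) : ‖Jint b S‖ ≤ 2 / |b| := by
  have hc : (-Complex.I * b) ≠ 0 :=
    mul_ne_zero (neg_ne_zero.mpr Complex.I_ne_zero) (Complex.ofReal_ne_zero.mpr hb)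
  have h1 : Jint b S = ∫ u in (-S)..S, Complex.exp ((-Complex.I * b) * u) := by
    rw [Jint, intervalIntegral.integral_of_le (by linarith)]
  rw [h1, integral_exp_mul_complex hc]
  rw [norm_div]
  have hnum : ‖Complex.exp (-Complex.I * b * S) - Complex.exp (-Complex.I * b * (-S))‖ ≤ 2 := by
    refine (norm_sub_le _ _).trans ?_
    have e1 := norm_exp_unit b S
    have e2 := norm_exp_unit b (-S)
    push_cast at e1 e2 ⊢
    rw [e1, e2]; norm_num
  have hden : ‖-Complex.I * b‖ = |b| := by
    rw [norm_mul, norm_neg, Complex.norm_I, one_mul, Complex.norm_real, Real.norm_eq_abs]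
  rw [hden]
  gcongr
  · push_cast; exact hnum

lemma aux_mean_value {d : ℕ} (x : ℕ → (Fin d → ℝ)) (hx : Function.Injective x)
    (c : ℕ → ℂ) (hc : Summable (fun j => ‖c j‖))
    (hzero : ∀ ξ : Fin d → ℝ,
      ∑' k, c k * Complex.exp (-Complex.I * ((∑ i, x k i * ξ i : ℝ) : ℂ)) = 0) :
    ∀ j, c j = 0 := by
  intro j
  set a : ℕ → Fin d → ℝ := fun k i => x k i - x j i with ha
  -- rewrite in product-of-exponentials form
  have hexp : ∀ (k : ℕ) (ξ : Fin d → ℝ),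
      (∏ i, Complex.exp ((-Complex.I * (a k i)) * (ξ i))) =
        Complex.exp (-Complex.I * ((∑ i, x k i * ξ i : ℝ) : ℂ)) *
          Complex.exp (Complex.I * ((∑ i, x j i * ξ i : ℝ) : ℂ)) := by
    intro k ξ
    rw [← Complex.exp_sum, ← Complex.exp_add]
    congr 1
    push_cast [ha]
    rw [Finset.sum_congr rfl (fun i _ => by ring : ∀ i ∈ Finset.univ,
      -Complex.I * ((x k i : ℂ) - x j i) * ξ i
        = -Complex.I * (x k i * ξ i) + Complex.I * (x j i * ξ i))]
    rw [Finset.sum_add_distrib, ← Finset.mul_sum, ← Finset.mul_sum]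
  have hzero' : ∀ ξ : Fin d → ℝ,
      ∑' k, c k * ∏ i, Complex.exp ((-Complex.I * (a k i)) * (ξ i)) = 0 := by
    intro ξ
    have : ∀ k, c k * ∏ i, Complex.exp ((-Complex.I * (a k i)) * (ξ i))
        = (c k * Complex.exp (-Complex.I * ((∑ i, x k i * ξ i : ℝ) : ℂ))) *
            Complex.exp (Complex.I * ((∑ i, x j i * ξ i : ℝ) : ℂ)) := by
      intro k; rw [hexp]; ring
    rw [tsum_congr this, tsum_mul_right, hzero, zero_mul]
  -- box truncations
  set T : ℕ → ℝ := fun n => (n : ℝ) + 1 with hTdef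
  have hT : ∀ n, 0 < T n := fun n => by positivity
  set P : ℕ → ℕ → ℂ := fun n k => c k * ∏ i, (Jint (a k i) (T n) / ((2 * T n : ℝ) : ℂ)) with hP
  have hD : ∀ n, ((2 * T n : ℝ) : ℂ) ≠ 0 := fun n =>
    Complex.ofReal_ne_zero.mpr (by have := hT n; positivity)
  -- Claim 1 : ∑' k, P n k = 0
  have claim1 : ∀ n, ∑' k, P n k = 0 := by
    intro n
    set ind : ℝ → ℝ → ℂ := fun b => (Set.Ioc (-(T n)) (T n)).indicator
      (fun u => Complex.exp ((-Complex.I * b) * u)) with hind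
    set G : ℕ → (Fin d → ℝ) → ℂ := fun k ξ => c k * ∏ i, ind (a k i) (ξ i) with hG
    have hindmeas : ∀ b, Measurable (ind b) := by
      intro b
      exact (Complex.continuous_exp.comp (by fun_prop)).measurable.indicator measurableSet_Ioc
    have h1 : ∀ ξ, ∑' k, G k ξ = 0 := by
      intro ξ
      by_cases hξ : ∀ i, ξ i ∈ Set.Ioc (-(T n)) (T n)
      · have : ∀ k, G k ξ = c k * ∏ i, Complex.exp ((-Complex.I * (a k i)) * (ξ i)) := by
          intro k
          rw [hG]
          simp only []
          congr 1
          exact Finset.prod_congr rfl fun i _ => Set.indicator_of_mem (hξ i) _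
        rw [tsum_congr this]; exact hzero' ξ
      · push_neg at hξ
        obtain ⟨i0, hi0⟩ := hξ
        have : ∀ k, G k ξ = 0 := by
          intro k
          rw [hG]
          simp only []
          rw [Finset.prod_eq_zero (Finset.mem_univ i0) (Set.indicator_of_notMem hi0 _), mul_zero]
        rw [tsum_congr this, tsum_zero]
    -- swap integral and tsum
    have hmeas : ∀ k, AEStronglyMeasurable (G k) volume := by
      intro k
      exact ((measurable_const.mul <| Finset.measurable_prod Finset.univ fun i _ =>
        (hindmeas (a k i)).comp (measurable_pi_apply i))).aestronglyMeasurable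
    have hbound : ∀ k (ξ : Fin d → ℝ), (‖G k ξ‖₊ : ENNReal) ≤
        (‖c k‖₊ : ENNReal) * (Set.pi Set.univ fun _ : Fin d => Set.Ioc (-(T n)) (T n)).indicator
          (fun _ => 1) ξ := by
      intro k ξ
      by_cases hξ : ξ ∈ Set.pi Set.univ fun _ : Fin d => Set.Ioc (-(T n)) (T n)
      · rw [Set.indicator_of_mem hξ, mul_one]
        have : ‖G k ξ‖ ≤ ‖c k‖ := by
          rw [hG]
          simp only []
          rw [norm_mul]
          have : ‖∏ i, ind (a k i) (ξ i)‖ ≤ 1 := by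
            rw [norm_prod]
            refine (Finset.prod_le_one (fun i _ => norm_nonneg _) (fun i _ => ?_))
            rw [hind]
            simp only []
            by_cases h : ξ i ∈ Set.Ioc (-(T n)) (T n)
            · rw [Set.indicator_of_mem h, norm_exp_unit]
            · rw [Set.indicator_of_notMem h]; simp
          calc ‖c k‖ * ‖∏ i, ind (a k i) (ξ i)‖ ≤ ‖c k‖ * 1 :=
                mul_le_mul_of_nonneg_left this (norm_nonneg _)
            _ = ‖c k‖ := mul_one _
        exact_mod_cast (ENNReal.coe_le_coe.mpr (by exact_mod_cast this))
      · rw [Set.indicator_of_notMem hξ, mul_zero]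
        have : G k ξ = 0 := by
          rw [Set.mem_univ_pi] at hξ
          push_neg at hξ
          obtain ⟨i0, hi0⟩ := hξ
          rw [hG]
          simp only []
          rw [Finset.prod_eq_zero (Finset.mem_univ i0) (Set.indicator_of_notMem hi0 _), mul_zero]
        simp [this]
    have hvol : (volume (Set.pi Set.univ fun _ : Fin d => Set.Ioc (-(T n)) (T n))) ≠ ⊤ := by
      rw [volume_pi_pi]
      simp only [Real.volume_Ioc]
      exact (ENNReal.prod_lt_top (fun i _ => ENNReal.ofReal_lt_top)).ne
    have hlint : ∑' k, ∫⁻ ξ, ‖G k ξ‖₊ ∂volume ≠ ⊤ := by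
      have hle : ∀ k, ∫⁻ ξ, ‖G k ξ‖₊ ∂volume ≤ (‖c k‖₊ : ENNReal) *
          (volume (Set.pi Set.univ fun _ : Fin d => Set.Ioc (-(T n)) (T n))) := by
        intro k
        calc ∫⁻ ξ, ‖G k ξ‖₊ ∂volume
            ≤ ∫⁻ ξ, (‖c k‖₊ : ENNReal) * (Set.pi Set.univ fun _ : Fin d =>
              Set.Ioc (-(T n)) (T n)).indicator (fun _ => 1) ξ ∂volume :=
              lintegral_mono (fun ξ => hbound k ξ)
          _ = (‖c k‖₊ : ENNReal) * ∫⁻ ξ, (Set.pi Set.univ fun _ : Fin d =>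
              Set.Ioc (-(T n)) (T n)).indicator (fun _ => 1) ξ ∂volume := lintegral_const_mul _
              ((measurable_one).indicator (MeasurableSet.univ_pi fun i => measurableSet_Ioc))
          _ = (‖c k‖₊ : ENNReal) * (volume (Set.pi Set.univ fun _ : Fin d =>
              Set.Ioc (-(T n)) (T n))) := by
              rw [lintegral_indicator (MeasurableSet.univ_pi fun i => measurableSet_Ioc)]
              simp
      refine ne_top_of_le_ne_top ?_ (ENNReal.tsum_le_tsum hle)
      rw [ENNReal.tsum_mul_right]
      refine ENNReal.mul_ne_top ?_ hvol
      rw [← ENNReal.coe_tsum]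
      · exact ENNReal.coe_ne_top
      · rw [← NNReal.summable_coe]
        convert hc using 2 with k; exact coe_nnnorm _
    have hswap := (integral_tsum hmeas hlint).symm
    have hzero2 : ∫ ξ, ∑' k, G k ξ = 0 := by
      have heq : (fun ξ : Fin d → ℝ => ∑' k, G k ξ) = fun _ => (0:ℂ) := funext h1
      rw [heq, integral_zero]
    have hsum0 : ∑' k, ∫ ξ, G k ξ = 0 := hswap.trans hzero2
    -- compute each integral
    have hint : ∀ k, ∫ ξ, G k ξ = c k * ∏ i, Jint (a k i) (T n) := by
      intro k
      rw [hG]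
      simp only []
      rw [integral_const_mul]
      congr 1
      rw [MeasureTheory.volume_pi, MeasureTheory.integral_fintype_prod_eq_prod (fun i u => ind (a k i) u)]
      refine Finset.prod_congr rfl fun i _ => ?_
      rw [hind]
      simp only []
      rw [MeasureTheory.integral_indicator measurableSet_Ioc]
      rfl
    rw [tsum_congr (fun k => show P n k =
        (c k * ∏ i, Jint (a k i) (T n)) * (((2 * T n : ℝ) : ℂ) ^ d)⁻¹ from ?_)]
    · rw [tsum_mul_right, ← tsum_congr hint, hsum0, zero_mul]
    · rw [hP]
      simp only []
      rw [Finset.prod_div_distrib, Finset.prod_const, Finset.card_univ, Fintype.card_fin]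
      ring
  -- Claim 2 : convergence of each term
  have claim2 : ∀ k, Tendsto (fun n => P n k) atTop
      (𝓝 (if k = j then c j else 0)) := by
    intro k
    by_cases hk : k = j
    · subst hk
      have : ∀ n, P n k = c k := by
        intro n
        rw [hP]
        simp only []
        have : ∀ i, Jint (a k i) (T n) / ((2 * T n : ℝ) : ℂ) = 1 := by
          intro i
          have hai : a k i = 0 := by rw [ha]; simp
          rw [hai, Jint_zero (hT n), div_self (hD n)]
        rw [Finset.prod_congr rfl fun i _ => this i, Finset.prod_const_one, mul_one]
      rw [if_pos rfl]
      simpa [this] using tendsto_const_nhds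
    · rw [if_neg hk]
      have hxk : x k ≠ x j := fun h => hk (hx h)
      obtain ⟨i0, hi0⟩ : ∃ i0, a k i0 ≠ 0 := by
        by_contra h
        push_neg at h
        exact hxk (funext fun i => by have := h i; rw [ha] at this; simpa using sub_eq_zero.mp this)
      -- squeeze to zero
      have hnorm : ∀ n, ‖P n k‖ ≤ ‖c k‖ * ((1 / |a k i0|) * (1 / T n)) := by
        intro n
        rw [hP]
        simp only []
        rw [norm_mul, norm_prod]
        have hfac_le1 : ∀ i, ‖Jint (a k i) (T n) / ((2 * T n : ℝ) : ℂ)‖ ≤ 1 := by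
          intro i
          rw [norm_div, Complex.norm_real, Real.norm_eq_abs,
            abs_of_pos (by have := hT n; positivity)]
          rw [div_le_one (by have := hT n; positivity)]
          exact Jint_norm_le (hT n)
        have hfac_i0 : ‖Jint (a k i0) (T n) / ((2 * T n : ℝ) : ℂ)‖ ≤ (1 / |a k i0|) * (1 / T n) := by
          rw [norm_div, Complex.norm_real, Real.norm_eq_abs,
            abs_of_pos (by have := hT n; positivity)]
          rw [div_le_iff₀ (by have := hT n; positivity)]
          calc ‖Jint (a k i0) (T n)‖ ≤ 2 / |a k i0| := Jint_norm_le_of_ne hi0 (hT n)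
            _ = (1 / |a k i0|) * (1 / T n) * (2 * T n) := by
                field_simp
                exact (mul_inv_cancel₀ (hT n).ne').symm
        have hprod : ∏ i, ‖Jint (a k i) (T n) / ((2 * T n : ℝ) : ℂ)‖ ≤
            (1 / |a k i0|) * (1 / T n) := by
          calc ∏ i, ‖Jint (a k i) (T n) / ((2 * T n : ℝ) : ℂ)‖
              = ‖Jint (a k i0) (T n) / ((2 * T n : ℝ) : ℂ)‖ *
                  ∏ i ∈ Finset.univ.erase i0, ‖Jint (a k i) (T n) / ((2 * T n : ℝ) : ℂ)‖ :=
                (Finset.mul_prod_erase _ _ (Finset.mem_univ i0)).symm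
            _ ≤ ‖Jint (a k i0) (T n) / ((2 * T n : ℝ) : ℂ)‖ * 1 :=
                mul_le_mul_of_nonneg_left
                  (Finset.prod_le_one (fun i _ => norm_nonneg _) (fun i _ => hfac_le1 i))
                  (norm_nonneg _)
            _ = ‖Jint (a k i0) (T n) / ((2 * T n : ℝ) : ℂ)‖ := mul_one _
            _ ≤ (1 / |a k i0|) * (1 / T n) := hfac_i0
        calc ‖c k‖ * ∏ i, ‖Jint (a k i) (T n) / ((2 * T n : ℝ) : ℂ)‖
            ≤ ‖c k‖ * ((1 / |a k i0|) * (1 / T n)) :=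
              mul_le_mul_of_nonneg_left hprod (norm_nonneg _)
          _ = ‖c k‖ * ((1 / |a k i0|) * (1 / T n)) := rfl
      refine squeeze_zero_norm hnorm ?_
      have : Tendsto (fun n : ℕ => (1 : ℝ) / T n) atTop (𝓝 0) := by
        rw [hTdef]
        exact tendsto_one_div_add_atTop_nhds_zero_nat
      have := (this.const_mul (1 / |a k i0|)).const_mul (‖c k‖)
      simpa using this
  -- Claim 3 : uniform bound
  have claim3 : ∀ n k, ‖P n k‖ ≤ ‖c k‖ := by
    intro n k
    rw [hP]
    simp only []
    rw [norm_mul, norm_prod]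
    have hfac_le1 : ∀ i, ‖Jint (a k i) (T n) / ((2 * T n : ℝ) : ℂ)‖ ≤ 1 := by
      intro i
      rw [norm_div, Complex.norm_real, Real.norm_eq_abs,
        abs_of_pos (by have := hT n; positivity)]
      rw [div_le_one (by have := hT n; positivity)]
      exact Jint_norm_le (hT n)
    calc ‖c k‖ * ∏ i, ‖Jint (a k i) (T n) / ((2 * T n : ℝ) : ℂ)‖
        ≤ ‖c k‖ * 1 := mul_le_mul_of_nonneg_left
          (Finset.prod_le_one (fun i _ => norm_nonneg _) (fun i _ => hfac_le1 i)) (norm_nonneg _)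
      _ = ‖c k‖ := by rw [mul_one]
  -- conclude
  have hlim := tendsto_tsum_of_dominated_convergence hc claim2
    (Filter.Eventually.of_forall claim3)
  have h0 : Tendsto (fun n => ∑' k, P n k) atTop (𝓝 0) := by
    rw [funext claim1]
    exact tendsto_const_nhds
  have := tendsto_nhds_unique hlim h0
  rwa [tsum_ite_eq j (fun _ => c j)] at this

lemma norm_exp_neg_I_real (r : ℝ) : ‖Complex.exp (-Complex.I * (r : ℂ))‖ = 1 := by
  rw [Complex.norm_exp]
  have : (-Complex.I * (r : ℂ)).re = 0 := by simp
  rw [this, Real.exp_zero]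

lemma nnnorm_exp_neg_I_real (r : ℝ) : ‖Complex.exp (-Complex.I * (r : ℂ))‖₊ = 1 :=
  NNReal.eq (by simpa using norm_exp_neg_I_real r)

theorem stmt_2 (d : ℕ) (hd : 1 ≤ d) (φ : (Fin d → ℝ) → ℂ)
    (hφ : Integrable φ)
    (hne : ∀ᵐ ξ : Fin d → ℝ, φ ξ ≠ 0) :
    ∀ x : ℕ → (Fin d → ℝ), Function.Injective x → ∀ c : ℕ → ℂ,
      Summable (fun j => ‖c j‖) →
      (∀ t : Fin d → ℝ,
        ∑' j, c j * ∫ ξ : Fin d → ℝ,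
          Complex.exp (-Complex.I * ((∑ i, (x j i - t i) * ξ i : ℝ) : ℂ)) * φ ξ = 0) →
      ∀ j, c j = 0 := by
  intro x hx c hc hyp
  -- the exponential sum
  set f : (Fin d → ℝ) → ℂ := fun ξ =>
    ∑' k, c k * Complex.exp (-Complex.I * ((∑ i, x k i * ξ i : ℝ) : ℂ)) with hf
  set F : (Fin d → ℝ) → ℂ := fun ξ => f ξ * φ ξ with hF
  have hsummap : Summable fun k => ‖c k‖₊ := by
    rw [← NNReal.summable_coe]
    convert hc using 2 with k; exact coe_nnnorm _
  have htsumnn : (∑' k, (‖c k‖₊ : ENNReal)) ≠ ⊤ := by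
    rw [← ENNReal.coe_tsum hsummap]; exact ENNReal.coe_ne_top
  -- Step 1: for every t, ∫ f ξ * (exp(I t·ξ) φ ξ) = 0
  have hstep1 : ∀ t : Fin d → ℝ,
      ∫ ξ : Fin d → ℝ, f ξ *
        (Complex.exp (Complex.I * ((∑ i, t i * ξ i : ℝ) : ℂ)) * φ ξ) = 0 := by
    intro t
    set g : ℕ → (Fin d → ℝ) → ℂ := fun k ξ =>
      c k * (Complex.exp (-Complex.I * ((∑ i, (x k i - t i) * ξ i : ℝ) : ℂ)) * φ ξ) with hg
    have hgmeas : ∀ k, AEStronglyMeasurable (g k) volume := by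
      intro k
      apply AEStronglyMeasurable.const_mul
      apply AEStronglyMeasurable.mul _ hφ.aestronglyMeasurable
      apply Continuous.aestronglyMeasurable
      apply Complex.continuous_exp.comp
      apply Continuous.mul continuous_const
      apply Complex.continuous_ofReal.comp
      exact continuous_finset_sum _ fun i _ =>
        (continuous_const.mul (continuous_apply i))
    have hglint : ∑' k, ∫⁻ ξ, ‖g k ξ‖₊ ∂volume ≠ ⊤ := by
      have hle : ∀ k, ∫⁻ ξ, ‖g k ξ‖₊ ∂volume ≤ (‖c k‖₊ : ENNReal) * ∫⁻ ξ, ‖φ ξ‖₊ ∂volume := by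
        intro k
        rw [← lintegral_const_mul' _ _ ENNReal.coe_ne_top]
        refine lintegral_mono fun ξ => ?_
        rw [hg]
        simp only []
        rw [nnnorm_mul, nnnorm_mul, nnnorm_exp_neg_I_real, one_mul, ENNReal.coe_mul]
      refine ne_top_of_le_ne_top ?_ (ENNReal.tsum_le_tsum hle)
      rw [ENNReal.tsum_mul_right]
      exact ENNReal.mul_ne_top htsumnn hφ.2.ne
    have hswap : ∑' k, ∫ ξ, g k ξ = ∫ ξ, ∑' k, g k ξ := (integral_tsum hgmeas hglint).symm
    have hterm : ∀ k, c k * (∫ ξ : Fin d → ℝ,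
        Complex.exp (-Complex.I * ((∑ i, (x k i - t i) * ξ i : ℝ) : ℂ)) * φ ξ) = ∫ ξ, g k ξ := by
      intro k
      rw [hg]
      simp only []
      rw [integral_const_mul]
    have h0 : ∫ ξ, ∑' k, g k ξ = 0 := by
      rw [← hswap, ← tsum_congr hterm]
      exact hyp t
    have hptwise : ∀ ξ : Fin d → ℝ, ∑' k, g k ξ =
        f ξ * (Complex.exp (Complex.I * ((∑ i, t i * ξ i : ℝ) : ℂ)) * φ ξ) := by
      intro ξ
      rw [hf]
      simp only []
      rw [← tsum_mul_right]
      refine tsum_congr fun k => ?_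
      rw [hg]
      simp only []
      have hexp : Complex.exp (-Complex.I * ((∑ i, (x k i - t i) * ξ i : ℝ) : ℂ)) =
          Complex.exp (-Complex.I * ((∑ i, x k i * ξ i : ℝ) : ℂ)) *
            Complex.exp (Complex.I * ((∑ i, t i * ξ i : ℝ) : ℂ)) := by
        rw [← Complex.exp_add]
        congr 1
        push_cast [Finset.sum_sub_distrib, sub_mul]
        ring
      rw [hexp]
      ring
    rw [← integral_congr_ae (Filter.Eventually.of_forall hptwise)]
    exact h0
  -- Step 2: transfer to EuclideanSpace and conclude Fourier transform vanishes
  set e := (MeasurableEquiv.toLp 2 (Fin d → ℝ)).symm with he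
  have hmp : MeasurePreserving e volume volume :=
    EuclideanSpace.volume_preserving_symm_measurableEquiv_toLp (Fin d)
  set FE : EuclideanSpace ℝ (Fin d) → ℂ := fun v => F (e v) with hFE
  have hFcont : Continuous f := by
    rw [hf]
    apply continuous_tsum ?_ hc ?_
    · intro k
      apply Continuous.mul continuous_const
      apply Complex.continuous_exp.comp
      apply Continuous.mul continuous_const
      apply Complex.continuous_ofReal.comp
      exact continuous_finset_sum _ fun i _ =>
        (continuous_const.mul (continuous_apply i))
    · intro k ξ
      rw [norm_mul, norm_exp_neg_I_real, mul_one]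
  have hFmeas : AEStronglyMeasurable F volume :=
    (hFcont.aestronglyMeasurable).mul hφ.aestronglyMeasurable
  have hFint : Integrable F volume := by
    apply Integrable.bdd_mul hφ hFcont.aestronglyMeasurable
    refine (Filter.Eventually.of_forall (fun ξ => ?_) : ∀ᵐ ξ ∂volume, ‖f ξ‖ ≤ ∑' k, ‖c k‖)
    rw [hf]
    simp only []
    refine (norm_tsum_le_tsum_norm ?_).trans ?_
    · refine hc.of_norm_bounded fun k => ?_
      rw [norm_norm, norm_mul, norm_exp_neg_I_real, mul_one]
    · refine Summable.tsum_le_tsum (fun k => ?_) (hc.of_norm_bounded fun k => ?_) hc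
      · rw [norm_mul, norm_exp_neg_I_real, mul_one]
      · rw [norm_norm, norm_mul, norm_exp_neg_I_real, mul_one]
  have hFEint : Integrable FE volume :=
    (hmp.integrable_comp_emb e.measurableEmbedding).mpr hFint
  have hfour : ∀ w : EuclideanSpace ℝ (Fin d), 𝓕 FE w = 0 := by
    intro w
    rw [Real.fourier_eq']
    have hcomp : ∀ v : EuclideanSpace ℝ (Fin d),
        Complex.exp (((-2 * Real.pi * (inner ℝ v w : ℝ)) : ℝ) * Complex.I) • FE v =
          (fun ξ : Fin d → ℝ => f ξ *
            (Complex.exp (Complex.I * ((∑ i, (fun i => -2 * Real.pi * w i) i * ξ i : ℝ) : ℂ)) *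
              φ ξ)) (e v) := by
      intro v
      have hinner : (inner ℝ v w : ℝ) = ∑ i, v i * w i := by
        rw [PiLp.inner_apply]
        simp [mul_comm]
      simp only [smul_eq_mul, hFE, hF]
      have harg : (((-2 * Real.pi * (inner ℝ v w : ℝ)) : ℝ) : ℂ) * Complex.I =
          Complex.I * ((∑ i, (-2 * Real.pi * w i) * (e v) i : ℝ) : ℂ) := by
        rw [hinner]
        push_cast [Finset.mul_sum]
        rw [Finset.sum_mul]
        refine Finset.sum_congr rfl fun i _ => ?_
        have hev : (e v) i = v i := rfl
        rw [hev]
        ring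
      rw [harg]
      ring
    rw [integral_congr_ae (Filter.Eventually.of_forall hcomp)]
    exact (hmp.integral_comp e.measurableEmbedding _).trans (hstep1 _)
  -- Step 3: F = 0 a.e.
  have hFE0 : ∀ᵐ v : EuclideanSpace ℝ (Fin d), FE v = 0 := aux_fourier_inj hFEint hfour
  have hF0 : ∀ᵐ ξ : Fin d → ℝ, F ξ = 0 := by
    have hqmp := (hmp.symm e).quasiMeasurePreserving
    have := hqmp.ae hFE0
    filter_upwards [this] with ξ hξ
    simpa [hFE] using hξ
  -- Step 4: f = 0 a.e., then everywhere
  have hf0ae : ∀ᵐ ξ : Fin d → ℝ, f ξ = 0 := by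
    filter_upwards [hF0, hne] with ξ h1 h2
    rw [hF] at h1
    exact (mul_eq_zero.mp h1).resolve_right h2
  have hf0 : ∀ ξ : Fin d → ℝ, f ξ = 0 := by
    have := (hFcont.ae_eq_iff_eq volume continuous_const).mp hf0ae
    intro ξ; exact congrFun this ξ
  -- Step 5: mean value argument
  exact aux_mean_value x hx c hc (fun ξ => hf0 ξ)
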